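/- Let Λ be a locally convex row-finite k-graph. Then Λ is cofinal if and only if the only saturated hereditary subsets of Λ^0 are ∅ and Λ^0. -/

import Mathlib

/-!
Common definitions: higher-rank graphs (`k`-graphs), boundary paths, the
equivalence relation `∼_Λ`, the periodicity group `Per(Λ)`, maximal tails,
hereditary/saturated sets, and (an axiomatization of) the Farthing
desourcification `Λ̄` of a locally convex row-finite `k`-graph `Λ`.
-/

/-- A `k`-graph: a countable small category `Λ` equipped with a degree functor
`d : Λ → ℕ^k` satisfying the factorization property.  Elements of `Path` are
the morphisms ("paths"); the vertices are the identity morphisms (the paths `v`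
with `r v = v`, equivalently of degree `0`).  The composition `comp μ ν` is
only meaningful when `s μ = r ν`. -/
structure KGraph (k : ℕ) where
  Path : Type
  countable_path : Countable Path
  nonempty_path : Nonempty Path
  r : Path → Path
  s : Path → Path
  d : Path → Fin k → ℕ
  comp : Path → Path → Path
  d_r : ∀ μ, d (r μ) = 0
  d_s : ∀ μ, d (s μ) = 0
  r_r : ∀ μ, r (r μ) = r μ
  s_r : ∀ μ, s (r μ) = r μ
  r_s : ∀ μ, r (s μ) = s μ
  s_s : ∀ μ, s (s μ) = s μ
  comp_id : ∀ μ, comp μ (s μ) = μ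
  id_comp : ∀ μ, comp (r μ) μ = μ
  r_comp : ∀ μ ν, s μ = r ν → r (comp μ ν) = r μ
  s_comp : ∀ μ ν, s μ = r ν → s (comp μ ν) = s ν
  d_comp : ∀ μ ν, s μ = r ν → d (comp μ ν) = d μ + d ν
  comp_assoc : ∀ μ ν ρ, s μ = r ν → s ν = r ρ →
    comp (comp μ ν) ρ = comp μ (comp ν ρ)
  factorization : ∀ (lam : Path) (m n : Fin k → ℕ), d lam = m + n →
    ∃! p : Path × Path, d p.1 = m ∧ d p.2 = n ∧ s p.1 = r p.2 ∧ lam = comp p.1 p.2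

namespace KGraph

variable {k : ℕ}

/-- The vertices of a `k`-graph are its identity morphisms. -/
def IsVertex (Λ : KGraph k) (v : Λ.Path) : Prop := Λ.r v = v

/-- `Λ.boundedPaths n` is the set `Λ^{≤ n}`: paths `λ` with `d λ ≤ n` such that
`d(λ)_i < n_i` implies `s(λ)Λ^{e_i} = ∅`. -/
def boundedPaths (Λ : KGraph k) (n : Fin k → ℕ) : Set Λ.Path :=
  {lam | Λ.d lam ≤ n ∧ ∀ i : Fin k, Λ.d lam i < n i →
    ∀ e, Λ.r e = Λ.s lam → Λ.d e ≠ Pi.single i 1}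

/-- `Λ` is row-finite if every `vΛ^n` is finite. -/
def RowFinite (Λ : KGraph k) : Prop :=
  ∀ (v : Λ.Path) (n : Fin k → ℕ), Λ.IsVertex v →
    {lam | Λ.r lam = v ∧ Λ.d lam = n}.Finite

/-- `Λ` is locally convex if for `i ≠ j`, `λ ∈ vΛ^{e_i}` and `μ ∈ vΛ^{e_j}`
one has `s(λ)Λ^{e_j} ≠ ∅` (by symmetry in `i, j` this also gives
`s(μ)Λ^{e_i} ≠ ∅`). -/
def LocallyConvex (Λ : KGraph k) : Prop :=
  ∀ i j : Fin k, i ≠ j → ∀ lam mu : Λ.Path, Λ.r lam = Λ.r mu →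
    Λ.d lam = Pi.single i 1 → Λ.d mu = Pi.single j 1 →
    ∃ lam', Λ.r lam' = Λ.s lam ∧ Λ.d lam' = Pi.single j 1

end KGraph

/-- A boundary path of `Λ`: a degree-preserving functor `x : Ω_{k,m} → Λ`
(`m = deg ∈ (ℕ ∪ {∞})^k`) such that `p ≤ m` and `p_i = m_i` imply
`x(p)Λ^{e_i} = ∅`.  `seg p q` is the path `x(p,q)`, meaningful for
`p ≤ q ≤ deg`; `seg p p` is the vertex `x(p)`. -/
structure BoundaryPath {k : ℕ} (Λ : KGraph k) where
  deg : Fin k → ℕ∞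
  seg : (Fin k → ℕ) → (Fin k → ℕ) → Λ.Path
  seg_d : ∀ p q : Fin k → ℕ, p ≤ q → (∀ i, (q i : ℕ∞) ≤ deg i) →
    Λ.d (seg p q) = q - p
  seg_r : ∀ p q : Fin k → ℕ, p ≤ q → (∀ i, (q i : ℕ∞) ≤ deg i) →
    Λ.r (seg p q) = seg p p
  seg_s : ∀ p q : Fin k → ℕ, p ≤ q → (∀ i, (q i : ℕ∞) ≤ deg i) →
    Λ.s (seg p q) = seg q q
  seg_comp : ∀ p q t : Fin k → ℕ, p ≤ q → q ≤ t → (∀ i, (t i : ℕ∞) ≤ deg i) →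
    Λ.comp (seg p q) (seg q t) = seg p t
  boundary : ∀ p : Fin k → ℕ, (∀ i, (p i : ℕ∞) ≤ deg i) →
    ∀ i : Fin k, (p i : ℕ∞) = deg i →
      ∀ e, Λ.r e = seg p p → Λ.d e ≠ Pi.single i 1

/-- `emin m e` is the coordinatewise minimum `m ∧ e` of `m ∈ ℕ^k` with the
(possibly infinite) degree `e ∈ (ℕ ∪ {∞})^k`, as an element of `ℕ^k`. -/
noncomputable def emin {k : ℕ} (m : Fin k → ℕ) (e : Fin k → ℕ∞) : Fin k → ℕ :=
  fun i => (min ((m i : ℕ∞)) (e i)).toNat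

/-- Equality of boundary paths (of the same degree), as functors. -/
def BPEq {k : ℕ} {Λ : KGraph k} (x y : BoundaryPath Λ) : Prop :=
  x.deg = y.deg ∧ ∀ p q : Fin k → ℕ, p ≤ q → (∀ i, (q i : ℕ∞) ≤ x.deg i) →
    x.seg p q = y.seg p q

/-- `IsExtension Λ lam x y` says that `y = lam · x` is the (unique) boundary
path with `y(0, d lam) = lam` and `y(d lam, d lam + p) = x(0, p)`. -/
def IsExtension {k : ℕ} (Λ : KGraph k) (lam : Λ.Path) (x y : BoundaryPath Λ) :
    Prop :=
  (∀ i, y.deg i = (Λ.d lam i : ℕ∞) + x.deg i) ∧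
  y.seg 0 (Λ.d lam) = lam ∧
  ∀ p : Fin k → ℕ, (∀ i, (p i : ℕ∞) ≤ x.deg i) →
    y.seg (Λ.d lam) (Λ.d lam + p) = x.seg 0 p

/-- The relation `μ ∼_Λ ν`: `s μ = s ν` and `μx = νx` for every boundary path
`x ∈ s(μ)Λ^{≤∞}`. -/
def KGraph.peq {k : ℕ} (Λ : KGraph k) (μ ν : Λ.Path) : Prop :=
  Λ.s μ = Λ.s ν ∧ ∀ x y z : BoundaryPath Λ, x.seg 0 0 = Λ.s μ →
    IsExtension Λ μ x y → IsExtension Λ ν x z → BPEq y z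

/-- `Per(Λ) = {d μ - d ν : μ ∼_Λ ν} ⊆ ℤ^k`. -/
def KGraph.Per {k : ℕ} (Λ : KGraph k) : Set (Fin k → ℤ) :=
  {g | ∃ μ ν : Λ.Path, Λ.peq μ ν ∧ g = fun i => (Λ.d μ i : ℤ) - (Λ.d ν i : ℤ)}

/-- `Λ` is aperiodic if for every vertex `v` there is a boundary path
`x ∈ vΛ^{≤∞}` such that distinct `μ, ν ∈ Λv` have `μx ≠ νx`. -/
def KGraph.Aperiodic {k : ℕ} (Λ : KGraph k) : Prop :=
  ∀ v : Λ.Path, Λ.IsVertex v → ∃ x : BoundaryPath Λ, x.seg 0 0 = v ∧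
    ∀ μ ν : Λ.Path, Λ.s μ = v → Λ.s ν = v → μ ≠ ν →
      ∀ y z : BoundaryPath Λ, IsExtension Λ μ x y → IsExtension Λ ν x z →
        ¬ BPEq y z

/-- A maximal tail: a nonempty set `T` of vertices such that (1) `s λ ∈ T`
implies `r λ ∈ T`; (2) for `v ∈ T` and `n ∈ ℕ^k` there is `λ ∈ vΛ^{≤n}` with
`s λ ∈ T`; (3) any `v, w ∈ T` are connected via `μ ∈ vΛ`, `ν ∈ wΛ` with
`s μ = s ν`. -/
def KGraph.IsMaximalTail {k : ℕ} (Λ : KGraph k) (T : Set Λ.Path) : Prop :=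
  T.Nonempty ∧ (∀ v ∈ T, Λ.IsVertex v) ∧
  (∀ lam : Λ.Path, Λ.s lam ∈ T → Λ.r lam ∈ T) ∧
  (∀ v ∈ T, ∀ n : Fin k → ℕ,
    ∃ lam ∈ Λ.boundedPaths n, Λ.r lam = v ∧ Λ.s lam ∈ T) ∧
  (∀ v ∈ T, ∀ w ∈ T, ∃ μ ν : Λ.Path, Λ.r μ = v ∧ Λ.r ν = w ∧ Λ.s μ = Λ.s ν)

/-- `H_{Per(Λ)}`: the set of vertices `v` such that for all `μ ∈ vΛ` and
`m ∈ ℕ^k` with `d μ - m ∈ Per(Λ)` there exists `ν ∈ vΛ^m` with `μ ∼_Λ ν`. -/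
def KGraph.HPer {k : ℕ} (Λ : KGraph k) : Set Λ.Path :=
  {v | Λ.IsVertex v ∧ ∀ μ : Λ.Path, Λ.r μ = v → ∀ m : Fin k → ℕ,
    (fun i => (Λ.d μ i : ℤ) - (m i : ℤ)) ∈ Λ.Per →
    ∃ ν : Λ.Path, Λ.r ν = v ∧ Λ.d ν = m ∧ Λ.peq μ ν}

/-- A set of vertices `H` is hereditary if `r λ ∈ H` implies `s λ ∈ H`. -/
def KGraph.Hereditary {k : ℕ} (Λ : KGraph k) (H : Set Λ.Path) : Prop :=
  ∀ lam : Λ.Path, Λ.r lam ∈ H → Λ.s lam ∈ H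

/-- A set of vertices `H` is saturated if `s(vΛ^{≤n}) ⊆ H` for some `n ∈ ℕ^k`
implies `v ∈ H`. -/
def KGraph.Saturated {k : ℕ} (Λ : KGraph k) (H : Set Λ.Path) : Prop :=
  ∀ v : Λ.Path, Λ.IsVertex v →
    (∃ n : Fin k → ℕ, ∀ lam ∈ Λ.boundedPaths n, Λ.r lam = v → Λ.s lam ∈ H) →
    v ∈ H

/-- `Σ(H)`: the smallest saturated set containing `H`. -/
def KGraph.SatClosure {k : ℕ} (Λ : KGraph k) (H : Set Λ.Path) : Set Λ.Path :=
  ⋂₀ {S : Set Λ.Path | H ⊆ S ∧ Λ.Saturated S}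

/-- A boundary path `x` is cofinal if every vertex `v` admits `n ≤ d x` with
`vΛx(n) ≠ ∅`. -/
def KGraph.CofinalBP {k : ℕ} (Λ : KGraph k) (x : BoundaryPath Λ) : Prop :=
  ∀ v : Λ.Path, Λ.IsVertex v → ∃ n : Fin k → ℕ,
    (∀ i, (n i : ℕ∞) ≤ x.deg i) ∧ ∃ μ : Λ.Path, Λ.r μ = v ∧ Λ.s μ = x.seg n n

/-- `Λ` is cofinal if all of its boundary paths are cofinal. -/
def KGraph.Cofinal {k : ℕ} (Λ : KGraph k) : Prop :=
  ∀ x : BoundaryPath Λ, Λ.CofinalBP x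

/-- `T(v) = {s μ : μ ∈ vΛ}`, the smallest hereditary set containing `v`. -/
def KGraph.tree {k : ℕ} (Λ : KGraph k) (v : Λ.Path) : Set Λ.Path :=
  {w | ∃ μ : Λ.Path, Λ.r μ = v ∧ Λ.s μ = w}

/-- `Δ(H₁,H₂) = {v ∈ H₁ : T(v) ∩ H₂ = ∅}`. -/
def KGraph.Delta {k : ℕ} (Λ : KGraph k) (H₁ H₂ : Set Λ.Path) : Set Λ.Path :=
  {v ∈ H₁ | Λ.tree v ∩ H₂ = ∅}

/-- `Ω(H₁,H₂) = {v ∈ H₁ \ H₂ : T(v) ∩ H₂ ≠ ∅}`. -/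
def KGraph.Omega {k : ℕ} (Λ : KGraph k) (H₁ H₂ : Set Λ.Path) : Set Λ.Path :=
  {v ∈ H₁ \ H₂ | (Λ.tree v ∩ H₂).Nonempty}

/-- The relation `H₁ ≻ H₂`. -/
def KGraph.Succ {k : ℕ} (Λ : KGraph k) (H₁ H₂ : Set Λ.Path) : Prop :=
  H₂ ⊆ H₁ ∧ (Λ.Delta H₁ H₂).Nonempty ∧
  ∀ v ∈ Λ.Omega H₁ H₂, ∃ n : Fin k → ℕ,
    ∀ lam ∈ Λ.boundedPaths n, Λ.r lam = v → Λ.s lam ∈ H₂ ∪ Λ.Delta H₁ H₂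

/-- `IsGlue Λ x n y p z` says that `z` is the boundary path
`x(0, n ∧ d x) · σ^{p ∧ d y}(y)`. -/
def IsGlue {k : ℕ} (Λ : KGraph k) (x : BoundaryPath Λ) (n : Fin k → ℕ)
    (y : BoundaryPath Λ) (p : Fin k → ℕ) (z : BoundaryPath Λ) : Prop :=
  (∀ i, z.deg i = (emin n x.deg i : ℕ∞) + (y.deg i - (emin p y.deg i : ℕ∞))) ∧
  z.seg 0 (emin n x.deg) = x.seg 0 (emin n x.deg) ∧
  ∀ t : Fin k → ℕ, (∀ i, ((emin p y.deg i + t i : ℕ) : ℕ∞) ≤ y.deg i) →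
    z.seg (emin n x.deg) (emin n x.deg + t) =
      y.seg (emin p y.deg) (emin p y.deg + t)

/-- The Farthing desourcification `Λ̄ = P_Λ/≈` of `Λ`: a `k`-graph `bar`
without sources whose morphisms are the classes `cls x m n = [x;(m,n)]`
(`x ∈ Λ^{≤∞}`, `m ≤ n ∈ ℕ^k`), where `[x;(m,n)] = [y;(p,q)]` iff
(P1) `x(m ∧ d x, n ∧ d x) = y(p ∧ d y, q ∧ d y)`,
(P2) `m - m ∧ d x = p - p ∧ d y` and (P3) `n - m = q - p`; together with the
range, source, degree and composition formulas, the canonical embedding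
`emb : Λ → Λ̄` (`λ ↦ [λx;(0, d λ)]`) and the projection `proj = π : Λ̄ → Λ`,
`π [x;(m,n)] = [x;(m ∧ d x, n ∧ d x)]`. -/
structure Desourcification {k : ℕ} (Λ : KGraph k) where
  bar : KGraph k
  noSources : ∀ v : bar.Path, bar.IsVertex v → ∀ i : Fin k,
    ∃ e, bar.r e = v ∧ bar.d e = Pi.single i 1
  cls : BoundaryPath Λ → (Fin k → ℕ) → (Fin k → ℕ) → bar.Path
  cls_surjective : ∀ μ : bar.Path,
    ∃ (x : BoundaryPath Λ) (m : Fin k → ℕ), μ = cls x m (m + bar.d μ)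
  cls_eq_iff : ∀ (x : BoundaryPath Λ) (m n : Fin k → ℕ) (y : BoundaryPath Λ)
    (p q : Fin k → ℕ), m ≤ n → p ≤ q →
    (cls x m n = cls y p q ↔
      (x.seg (emin m x.deg) (emin n x.deg) =
          y.seg (emin p y.deg) (emin q y.deg) ∧
        m - emin m x.deg = p - emin p y.deg ∧
        n - m = q - p))
  d_cls : ∀ (x : BoundaryPath Λ) (m n : Fin k → ℕ), m ≤ n →
    bar.d (cls x m n) = n - m
  r_cls : ∀ (x : BoundaryPath Λ) (m n : Fin k → ℕ), m ≤ n →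
    bar.r (cls x m n) = cls x m m
  s_cls : ∀ (x : BoundaryPath Λ) (m n : Fin k → ℕ), m ≤ n →
    bar.s (cls x m n) = cls x n n
  comp_cls : ∀ (x y : BoundaryPath Λ) (m n p q : Fin k → ℕ), m ≤ n → p ≤ q →
    bar.s (cls x m n) = bar.r (cls y p q) →
    ∀ z : BoundaryPath Λ, IsGlue Λ x n y p z →
      bar.comp (cls x m n) (cls y p q) = cls z m (n + (q - p))
  emb : Λ.Path → bar.Path
  emb_injective : Function.Injective emb
  emb_r : ∀ lam : Λ.Path, emb (Λ.r lam) = bar.r (emb lam)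
  emb_s : ∀ lam : Λ.Path, emb (Λ.s lam) = bar.s (emb lam)
  emb_d : ∀ lam : Λ.Path, bar.d (emb lam) = Λ.d lam
  emb_comp : ∀ μ ν : Λ.Path, Λ.s μ = Λ.r ν →
    emb (Λ.comp μ ν) = bar.comp (emb μ) (emb ν)
  emb_cls : ∀ (lam : Λ.Path) (x y : BoundaryPath Λ), x.seg 0 0 = Λ.s lam →
    IsExtension Λ lam x y → emb lam = cls y 0 (Λ.d lam)
  proj : bar.Path → Λ.Path
  proj_cls : ∀ (x : BoundaryPath Λ) (m n : Fin k → ℕ), m ≤ n →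
    proj (cls x m n) = x.seg (emin m x.deg) (emin n x.deg)

/-- `IsInfClass D x p z` says that `z` is the infinite path `[x;(p,∞)]` of
`Λ̄`, i.e. `z(m,n) = [x;(p+m, p+n)]`. -/
def IsInfClass {k : ℕ} {Λ : KGraph k} (D : Desourcification Λ)
    (x : BoundaryPath Λ) (p : Fin k → ℕ) (z : BoundaryPath D.bar) : Prop :=
  (∀ i, z.deg i = (⊤ : ℕ∞)) ∧
  ∀ m n : Fin k → ℕ, m ≤ n → z.seg m n = D.cls x (p + m) (p + n)

/-- `IsShift x n y` says that `y = σ^n(x)` is the `n`-shifted boundary path,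
`σ^n(x)(p,q) = x(p+n, q+n)`, of degree `d x - n`. -/
def IsShift {k : ℕ} {Λ : KGraph k} (x : BoundaryPath Λ) (n : Fin k → ℕ)
    (y : BoundaryPath Λ) : Prop :=
  (∀ i, y.deg i = x.deg i - (n i : ℕ∞)) ∧
  ∀ p q : Fin k → ℕ, p ≤ q → (∀ i, (q i : ℕ∞) ≤ y.deg i) →
    y.seg p q = x.seg (p + n) (q + n)

/-! ### Auxiliary machinery -/

namespace KGraph

variable {k : ℕ}

lemma emin_cast {k : ℕ} (m : Fin k → ℕ) (e : Fin k → ℕ∞) (i : Fin k) :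
    ((emin m e i : ℕ) : ℕ∞) = min (m i : ℕ∞) (e i) := by
  unfold emin
  rcases eq_or_ne (e i) ⊤ with h | h
  · simp [h]
  · have hne : min ((m i : ℕ∞)) (e i) ≠ ⊤ := by
      simp [min_eq_top, h]
    exact ENat.coe_toNat hne

lemma pile {f g : Fin k → ℕ} (h : ∀ i, f i ≤ g i) : f ≤ g := h

lemma isVertex_s (Λ : KGraph k) (μ : Λ.Path) : Λ.IsVertex (Λ.s μ) := Λ.r_s μ

lemma s_of_vertex (Λ : KGraph k) {v : Λ.Path} (hv : Λ.IsVertex v) : Λ.s v = v := by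
  have := Λ.s_r v
  rwa [hv] at this

open Classical in
/-- Split a path at degree `m`. -/
noncomputable def split (Λ : KGraph k) (lam : Λ.Path) (m : Fin k → ℕ) :
    Λ.Path × Λ.Path :=
  if h : m ≤ Λ.d lam then
    (Λ.factorization lam m (fun i => Λ.d lam i - m i)
      (funext fun i => by
        have h2 : m i ≤ Λ.d lam i := h i
        simp only [Pi.add_apply]; omega)).exists.choose
  else (lam, lam)

lemma split_spec (Λ : KGraph k) (lam : Λ.Path) (m : Fin k → ℕ) (h : m ≤ Λ.d lam) :
    Λ.d (Λ.split lam m).1 = m ∧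
    Λ.d (Λ.split lam m).2 = (fun i => Λ.d lam i - m i) ∧
    Λ.s (Λ.split lam m).1 = Λ.r (Λ.split lam m).2 ∧
    lam = Λ.comp (Λ.split lam m).1 (Λ.split lam m).2 := by
  unfold split
  rw [dif_pos h]
  exact (Λ.factorization lam m (fun i => Λ.d lam i - m i)
    (funext fun i => by
      have h2 : m i ≤ Λ.d lam i := h i
      simp only [Pi.add_apply]; omega)).exists.choose_spec

lemma split_eq (Λ : KGraph k) {lam a b : Λ.Path} {m : Fin k → ℕ}
    (hd : Λ.d a = m) (hs : Λ.s a = Λ.r b) (hc : lam = Λ.comp a b) :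
    Λ.split lam m = (a, b) := by
  have hdl : Λ.d lam = Λ.d a + Λ.d b := by rw [hc, Λ.d_comp a b hs]
  have h : m ≤ Λ.d lam := by
    refine pile fun i => ?_
    rw [hdl, ← hd]
    simp only [Pi.add_apply]
    omega
  have hfact := Λ.factorization lam m (fun i => Λ.d lam i - m i)
    (funext fun i => by
      have h2 : m i ≤ Λ.d lam i := h i
      simp only [Pi.add_apply]; omega)
  have h1 := Λ.split_spec lam m h
  refine hfact.unique ⟨h1.1, h1.2.1, h1.2.2.1, h1.2.2.2⟩ ⟨hd, ?_, hs, hc⟩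
  funext i
  rw [hdl, ← hd]
  simp only [Pi.add_apply]
  omega

lemma split_zero (Λ : KGraph k) (lam : Λ.Path) :
    Λ.split lam 0 = (Λ.r lam, lam) :=
  Λ.split_eq (Λ.d_r lam) (Λ.s_r lam) (Λ.id_comp lam).symm

lemma split_full (Λ : KGraph k) (lam : Λ.Path) :
    Λ.split lam (Λ.d lam) = (lam, Λ.s lam) :=
  Λ.split_eq rfl (Λ.r_s lam).symm (Λ.comp_id lam).symm

lemma eq_r_of_d_eq_zero (Λ : KGraph k) {lam : Λ.Path} (h : Λ.d lam = 0) :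
    lam = Λ.r lam := by
  have h1 := Λ.split_zero lam
  rw [← h] at h1
  have h2 := Λ.split_full lam
  rw [h1] at h2
  exact congrArg Prod.fst h2.symm

lemma r_split₁ (Λ : KGraph k) (lam : Λ.Path) (m : Fin k → ℕ) (h : m ≤ Λ.d lam) :
    Λ.r (Λ.split lam m).1 = Λ.r lam := by
  obtain ⟨_, _, hs, hc⟩ := Λ.split_spec lam m h
  conv_rhs => rw [hc]
  exact (Λ.r_comp _ _ hs).symm

lemma s_split₂ (Λ : KGraph k) (lam : Λ.Path) (m : Fin k → ℕ) (h : m ≤ Λ.d lam) :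
    Λ.s (Λ.split lam m).2 = Λ.s lam := by
  obtain ⟨_, _, hs, hc⟩ := Λ.split_spec lam m h
  conv_rhs => rw [hc]
  exact (Λ.s_comp _ _ hs).symm

/-- Iterated second splits. -/
lemma split₂_split₂ (Λ : KGraph k) (lam : Λ.Path) (p t : Fin k → ℕ)
    (h : p + t ≤ Λ.d lam) :
    (Λ.split (Λ.split lam p).2 t).2 = (Λ.split lam (p + t)).2 := by
  have hp : p ≤ Λ.d lam := by
    refine pile fun i => ?_
    have h2 : (p + t) i ≤ Λ.d lam i := h i
    simp only [Pi.add_apply] at h2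
    omega
  obtain ⟨hd1, hd2, hs1, hc1⟩ := Λ.split_spec lam p hp
  have ht : t ≤ Λ.d (Λ.split lam p).2 := by
    refine pile fun i => ?_
    rw [hd2]
    show t i ≤ Λ.d lam i - p i
    have h2 : (p + t) i ≤ Λ.d lam i := h i
    simp only [Pi.add_apply] at h2
    omega
  obtain ⟨hd1', hd2', hs1', hc1'⟩ := Λ.split_spec (Λ.split lam p).2 t ht
  have hmid : Λ.s (Λ.split lam p).1 = Λ.r (Λ.split (Λ.split lam p).2 t).1 := by
    rw [hs1]
    exact (Λ.r_split₁ _ t ht).symm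
  have := Λ.split_eq (lam := lam)
    (a := Λ.comp (Λ.split lam p).1 (Λ.split (Λ.split lam p).2 t).1)
    (b := (Λ.split (Λ.split lam p).2 t).2) (m := p + t)
    (by rw [Λ.d_comp _ _ hmid, hd1, hd1'])
    (by rw [Λ.s_comp _ _ hmid]; exact hs1')
    (by rw [Λ.comp_assoc _ _ _ hmid hs1', ← hc1']; exact hc1)
  exact (congrArg Prod.snd this).symm

/-- Composing first splits. -/
lemma comp_split₁ (Λ : KGraph k) (lam : Λ.Path) (u w : Fin k → ℕ)
    (h : u + w ≤ Λ.d lam) :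
    Λ.comp (Λ.split lam u).1 (Λ.split (Λ.split lam u).2 w).1
      = (Λ.split lam (u + w)).1 := by
  have hu : u ≤ Λ.d lam := by
    refine pile fun i => ?_
    have h2 : (u + w) i ≤ Λ.d lam i := h i
    simp only [Pi.add_apply] at h2
    omega
  obtain ⟨hd1, hd2, hs1, hc1⟩ := Λ.split_spec lam u hu
  have hw : w ≤ Λ.d (Λ.split lam u).2 := by
    refine pile fun i => ?_
    rw [hd2]
    show w i ≤ Λ.d lam i - u i
    have h2 : (u + w) i ≤ Λ.d lam i := h i
    simp only [Pi.add_apply] at h2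
    omega
  obtain ⟨hd1', hd2', hs1', hc1'⟩ := Λ.split_spec (Λ.split lam u).2 w hw
  have hcomp : Λ.s (Λ.split lam u).1 = Λ.r (Λ.split (Λ.split lam u).2 w).1 := by
    rw [hs1]
    exact (Λ.r_split₁ _ w hw).symm
  have := Λ.split_eq (lam := lam)
    (a := Λ.comp (Λ.split lam u).1 (Λ.split (Λ.split lam u).2 w).1)
    (b := (Λ.split (Λ.split lam u).2 w).2) (m := u + w)
    (by rw [Λ.d_comp _ _ hcomp, hd1, hd1'])
    (by rw [Λ.s_comp _ _ hcomp]; exact hs1')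
    (by rw [Λ.comp_assoc _ _ _ hcomp hs1', ← hc1']; exact hc1)
  exact (congrArg Prod.fst this).symm

/-- The `(p,q)`-segment of a finite path. -/
noncomputable def segment (Λ : KGraph k) (lam : Λ.Path) (p q : Fin k → ℕ) :
    Λ.Path :=
  (Λ.split (Λ.split lam p).2 (fun i => q i - p i)).1

section SegmentLemmas

variable (Λ : KGraph k) {lam : Λ.Path} {p q t : Fin k → ℕ}

lemma sub_le_split₂ (hpq : p ≤ q) (hq : q ≤ Λ.d lam) :
    (fun i => q i - p i) ≤ Λ.d (Λ.split lam p).2 := by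
  have hp : p ≤ Λ.d lam := le_trans hpq hq
  obtain ⟨_, hd2, _, _⟩ := Λ.split_spec lam p hp
  refine pile fun i => ?_
  rw [hd2]
  show q i - p i ≤ Λ.d lam i - p i
  have h2 : q i ≤ Λ.d lam i := hq i
  omega

lemma segment_d (hpq : p ≤ q) (hq : q ≤ Λ.d lam) :
    Λ.d (Λ.segment lam p q) = fun i => q i - p i :=
  (Λ.split_spec _ _ (Λ.sub_le_split₂ hpq hq)).1

lemma segment_self (hp : p ≤ Λ.d lam) :
    Λ.segment lam p p = Λ.r (Λ.split lam p).2 := by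
  unfold segment
  have : (fun i => p i - p i) = (0 : Fin k → ℕ) := by funext i; simp
  rw [this, Λ.split_zero]

lemma isVertex_segment_self (hp : p ≤ Λ.d lam) : Λ.IsVertex (Λ.segment lam p p) := by
  rw [Λ.segment_self hp]
  exact Λ.r_r _

lemma r_segment (hpq : p ≤ q) (hq : q ≤ Λ.d lam) :
    Λ.r (Λ.segment lam p q) = Λ.segment lam p p := by
  rw [Λ.segment_self (le_trans hpq hq)]
  exact Λ.r_split₁ _ _ (Λ.sub_le_split₂ hpq hq)

lemma s_segment (hpq : p ≤ q) (hq : q ≤ Λ.d lam) :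
    Λ.s (Λ.segment lam p q) = Λ.segment lam q q := by
  have h2 : p + (fun i => q i - p i) = q := by
    funext i
    have h3 : p i ≤ q i := hpq i
    simp only [Pi.add_apply]
    omega
  have h3 := Λ.split₂_split₂ lam p (fun i => q i - p i) (by rw [h2]; exact hq)
  rw [h2] at h3
  have h1 := (Λ.split_spec (Λ.split lam p).2 _ (Λ.sub_le_split₂ hpq hq)).2.2.1
  rw [Λ.segment_self hq]
  show Λ.s (Λ.split (Λ.split lam p).2 fun i => q i - p i).1 = Λ.r (Λ.split lam q).2
  rw [h1, h3]

lemma segment_comp (hpq : p ≤ q) (hqt : q ≤ t) (ht : t ≤ Λ.d lam) :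
    Λ.comp (Λ.segment lam p q) (Λ.segment lam q t) = Λ.segment lam p t := by
  unfold segment
  have hq : q ≤ Λ.d lam := le_trans hqt ht
  have hp : p ≤ Λ.d lam := le_trans hpq hq
  have h2 : p + (fun i => q i - p i) = q := by
    funext i; have h3 : p i ≤ q i := hpq i; simp only [Pi.add_apply]; omega
  have hkey : (Λ.split lam q).2 = (Λ.split (Λ.split lam p).2 (fun i => q i - p i)).2 := by
    conv_lhs => rw [← h2]
    exact (Λ.split₂_split₂ lam p (fun i => q i - p i) (by rw [h2]; exact hq)).symm
  rw [hkey]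
  have hcs := Λ.comp_split₁ (Λ.split lam p).2 (fun i => q i - p i) (fun i => t i - q i)
    (by
      refine pile fun i => ?_
      have h3 := (Λ.split_spec lam p hp).2.1
      rw [h3]
      show q i - p i + (t i - q i) ≤ Λ.d lam i - p i
      have e1 : p i ≤ q i := hpq i
      have e2 : q i ≤ t i := hqt i
      have e3 : t i ≤ Λ.d lam i := ht i
      omega)
  have harg : ((fun i => q i - p i) + fun i => t i - q i) = (fun i => t i - p i) := by
    funext i
    have e1 : p i ≤ q i := hpq i
    have e2 : q i ≤ t i := hqt i
    simp only [Pi.add_apply]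
    omega
  rw [harg] at hcs
  exact hcs

lemma segment_zero_zero : Λ.segment lam 0 0 = Λ.r lam := by
  rw [Λ.segment_self (pile fun i => by simp), Λ.split_zero]

lemma segment_zero_d : Λ.segment lam 0 (Λ.d lam) = lam := by
  unfold segment
  rw [Λ.split_zero]
  have : (fun i => Λ.d lam i - (0 : Fin k → ℕ) i) = Λ.d lam := by
    funext i; simp
  rw [this, Λ.split_full]

lemma segment_d_d : Λ.segment lam (Λ.d lam) (Λ.d lam) = Λ.s lam := by
  rw [Λ.segment_self (le_refl _), Λ.split_full]
  exact Λ.r_s lam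

/-- Segments of a prefix. -/
lemma segment_prefix {a b : Λ.Path} (hs : Λ.s a = Λ.r b) (hpq : p ≤ q)
    (hq : q ≤ Λ.d a) :
    Λ.segment (Λ.comp a b) p q = Λ.segment a p q := by
  have hp : p ≤ Λ.d a := le_trans hpq hq
  obtain ⟨hd1, hd2, hs1, hc1⟩ := Λ.split_spec a p hp
  -- split (a·b) p = ((split a p).1, comp (split a p).2 b)
  have hsplit : Λ.split (Λ.comp a b) p = ((Λ.split a p).1, Λ.comp (Λ.split a p).2 b) := by
    refine Λ.split_eq hd1 ?_ ?_
    · rw [hs1, Λ.r_comp _ _ (by rw [Λ.s_split₂ a p hp]; exact hs)]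
    · rw [← Λ.comp_assoc _ _ _ hs1 (by rw [Λ.s_split₂ a p hp]; exact hs), ← hc1]
  unfold segment
  rw [hsplit]
  -- now split (comp (split a p).2 b) (q-p) has first component split (split a p).2 (q-p) .1
  have hw : (fun i => q i - p i) ≤ Λ.d (Λ.split a p).2 := Λ.sub_le_split₂ hpq hq
  obtain ⟨hd1', hd2', hs1', hc1'⟩ := Λ.split_spec (Λ.split a p).2 _ hw
  have : Λ.split (Λ.comp (Λ.split a p).2 b) (fun i => q i - p i)
      = ((Λ.split (Λ.split a p).2 (fun i => q i - p i)).1,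
         Λ.comp (Λ.split (Λ.split a p).2 (fun i => q i - p i)).2 b) := by
    refine Λ.split_eq hd1' ?_ ?_
    · rw [hs1', Λ.r_comp _ _ (by rw [Λ.s_split₂ _ _ hw, Λ.s_split₂ a p hp]; exact hs)]
    · rw [← Λ.comp_assoc _ _ _ hs1' (by rw [Λ.s_split₂ _ _ hw, Λ.s_split₂ a p hp]; exact hs),
        ← hc1']
  rw [this]

/-- Segments of a suffix. -/
lemma segment_suffix {a b : Λ.Path} (hs : Λ.s a = Λ.r b) (hpq : p ≤ q)
    (hq : q ≤ Λ.d b) :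
    Λ.segment (Λ.comp a b) (Λ.d a + p) (Λ.d a + q) = Λ.segment b p q := by
  have hp : p ≤ Λ.d b := le_trans hpq hq
  obtain ⟨hd1, hd2, hs1, hc1⟩ := Λ.split_spec b p hp
  have hcmid : Λ.s a = Λ.r (Λ.split b p).1 := by rw [hs, Λ.r_split₁ b p hp]
  have hsplit : Λ.split (Λ.comp a b) (Λ.d a + p)
      = (Λ.comp a (Λ.split b p).1, (Λ.split b p).2) := by
    refine Λ.split_eq ?_ ?_ ?_
    · rw [Λ.d_comp _ _ hcmid, hd1]
    · rw [Λ.s_comp _ _ hcmid]; exact hs1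
    · rw [Λ.comp_assoc _ _ _ hcmid hs1, ← hc1]
  unfold segment
  rw [hsplit]
  have harg : (fun i => (Λ.d a + q) i - (Λ.d a + p) i) = fun i => q i - p i := by
    funext i
    simp only [Pi.add_apply]
    omega
  show (Λ.split (Λ.split b p).2 fun i => (Λ.d a + q) i - (Λ.d a + p) i).1 = _
  rw [harg]

/-- Segments of segments of a boundary path. -/
lemma segment_bpseg (x : BoundaryPath Λ) (a b : Fin k → ℕ) (hab : a ≤ b)
    (hb : ∀ i, (b i : ℕ∞) ≤ x.deg i) (hpq : p ≤ q) (hq : a + q ≤ b) :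
    Λ.segment (x.seg a b) p q = x.seg (a + p) (a + q) := by
  have hap : a ≤ a + p := by refine pile fun i => ?_; simp only [Pi.add_apply]; omega
  have hpq' : a + p ≤ a + q := by
    refine pile fun i => ?_
    have h3 : p i ≤ q i := hpq i
    simp only [Pi.add_apply]
    omega
  have haq : a + q ≤ b := hq
  have hb' : ∀ i, ((a + q) i : ℕ∞) ≤ x.deg i := fun i =>
    le_trans (by exact_mod_cast Nat.cast_le.mpr (haq i)) (hb i)
  have hb'' : ∀ i, ((a + p) i : ℕ∞) ≤ x.deg i := fun i =>
    le_trans (by exact_mod_cast Nat.cast_le.mpr (hpq' i)) (hb' i)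
  -- split (x.seg a b) p = (x.seg a (a+p), x.seg (a+p) b)
  have h1 : Λ.split (x.seg a b) p = (x.seg a (a + p), x.seg (a + p) b) := by
    refine Λ.split_eq ?_ ?_ ?_
    · rw [x.seg_d a (a + p) hap hb'']
      funext i; simp only [Pi.sub_apply, Pi.add_apply]; omega
    · rw [x.seg_s a (a + p) hap hb'', x.seg_r (a + p) b (le_trans hpq' haq) hb]
    · rw [x.seg_comp a (a + p) b hap (le_trans hpq' haq) hb]
  unfold segment
  rw [h1]
  have h2 : (Λ.split (x.seg (a + p) b) (fun i => q i - p i)).1 = x.seg (a + p) (a + q) := by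
    have := Λ.split_eq (lam := x.seg (a + p) b) (m := fun i => q i - p i)
      (a := x.seg (a + p) (a + q)) (b := x.seg (a + q) b)
      (by
        rw [x.seg_d (a + p) (a + q) hpq' hb']
        funext i
        have h3 : p i ≤ q i := hpq i
        simp only [Pi.sub_apply, Pi.add_apply]
        omega)
      (by rw [x.seg_s (a + p) (a + q) hpq' hb', x.seg_r (a + q) b haq hb])
      (by rw [x.seg_comp (a + p) (a + q) b hpq' haq hb])
    exact congrArg Prod.fst this
  exact h2

end SegmentLemmas

/-- Local convexity propagates edges of colour `i` along paths of `i`-degree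
zero. -/
lemma propagate (Λ : KGraph k) (hlc : Λ.LocallyConvex) :
    ∀ N : ℕ, ∀ η : Λ.Path, ∀ i : Fin k, (∑ l, Λ.d η l) = N → Λ.d η i = 0 →
    (∃ e, Λ.r e = Λ.r η ∧ Λ.d e = Pi.single i 1) →
    ∃ e, Λ.r e = Λ.s η ∧ Λ.d e = Pi.single i 1 := by
  intro N
  induction N using Nat.strong_induction_on with
  | _ N ih =>
    intro η i hN hi ⟨e, hre, hde⟩
    by_cases hz : Λ.d η = 0
    · have h1 := Λ.eq_r_of_d_eq_zero hz
      refine ⟨e, ?_, hde⟩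
      rw [hre, h1, Λ.s_r]
      exact Λ.r_r η
    · -- pick a coordinate j with d η j > 0
      have hex : ∃ j, 0 < Λ.d η j := by
        by_contra hco
        push_neg at hco
        exact hz (funext fun j => Nat.le_zero.mp (hco j))
      obtain ⟨j, hj⟩ := hex
      have hji : j ≠ i := fun h => by rw [h, hi] at hj; exact Nat.lt_irrefl 0 hj
      have hsle : Pi.single j 1 ≤ Λ.d η := by
        refine pile fun l => ?_
        rcases eq_or_ne l j with h | h
        · rw [h, Pi.single_eq_same]; exact hj
        · rw [Pi.single_eq_of_ne h]; exact Nat.zero_le _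
      obtain ⟨hd1, hd2, hs1, hc1⟩ := Λ.split_spec η (Pi.single j 1) hsle
      set f := (Λ.split η (Pi.single j 1)).1 with hf
      set η' := (Λ.split η (Pi.single j 1)).2 with hη'
      have hrf : Λ.r f = Λ.r η := Λ.r_split₁ η _ hsle
      -- use local convexity to get an i-edge at s f = r η'
      obtain ⟨e', hre', hde'⟩ := hlc j i hji f e (by rw [hrf, hre]) hd1 hde
      have hNi : (∑ l, Λ.d η' l) < N := by
        rw [← hN, hc1, Λ.d_comp _ _ hs1]
        have : ∀ l, Λ.d f l + Λ.d η' l = (Λ.d f + Λ.d η') l := fun l => rfl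
        rw [Finset.sum_congr rfl fun l _ => (this l).symm, Finset.sum_add_distrib]
        have hfs : (∑ l, Λ.d f l) = 1 := by
          rw [hd1]
          simp
        omega
      have hi' : Λ.d η' i = 0 := by
        have := congrFun hd2 i
        rw [this, hi]
        omega
      obtain ⟨e'', h1, h2⟩ := ih _ hNi η' i rfl hi' ⟨e', by rw [hre', hs1], hde'⟩
      refine ⟨e'', ?_, h2⟩
      rw [h1, Λ.s_split₂ η _ hsle]

/-- A chain of composable paths, with partial products `pi`. -/
structure Chain (Λ : KGraph k) where
  pi : ℕ → Λ.Path
  lam : ℕ → Λ.Path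
  hsr : ∀ j, Λ.s (pi j) = Λ.r (lam j)
  hcomp : ∀ j, pi (j + 1) = Λ.comp (pi j) (lam j)

namespace Chain

variable {Λ : KGraph k} (c : Chain Λ)

lemma d_mono : ∀ {j j' : ℕ}, j ≤ j' → Λ.d (c.pi j) ≤ Λ.d (c.pi j') := by
  intro j j' h
  induction j' with
  | zero => rw [Nat.le_zero.mp h]
  | succ n ihn =>
    rcases Nat.lt_or_ge j (n + 1) with h' | h'
    · refine le_trans (ihn (Nat.lt_succ_iff.mp h')) ?_
      rw [c.hcomp n, Λ.d_comp _ _ (c.hsr n)]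
      refine pile fun i => ?_
      simp only [Pi.add_apply]
      omega
    · rw [Nat.le_antisymm h h']

/-- The limit degree of a chain. -/
noncomputable def deg : Fin k → ℕ∞ := fun i => ⨆ j, (Λ.d (c.pi j) i : ℕ∞)

lemma coe_le_deg (j : ℕ) (i : Fin k) : (Λ.d (c.pi j) i : ℕ∞) ≤ c.deg i :=
  le_iSup (fun j => (Λ.d (c.pi j) i : ℕ∞)) j

lemma cover {q : Fin k → ℕ} (hq : ∀ i, (q i : ℕ∞) ≤ c.deg i) :
    ∃ j, q ≤ Λ.d (c.pi j) := by
  have h1 : ∀ i : Fin k, ∃ j, q i ≤ Λ.d (c.pi j) i := by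
    intro i
    by_contra hco
    push_neg at hco
    have h2 : c.deg i ≤ ((q i - 1 : ℕ) : ℕ∞) := by
      refine iSup_le fun j => ?_
      have h6 := hco j
      exact Nat.cast_le.mpr (by omega)
    have h3 := le_trans (hq i) h2
    have h4 : q i ≤ q i - 1 := by exact_mod_cast h3
    have h5 : 0 < q i := by
      rcases Nat.eq_zero_or_pos (q i) with h | h
      · exact absurd (h ▸ hco 0) (by omega)
      · exact h
    omega
  choose Jf hJf using h1
  refine ⟨Finset.univ.sup Jf, pile fun i => ?_⟩
  exact le_trans (hJf i) (c.d_mono (Finset.le_sup (Finset.mem_univ i)) i)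

open Classical in
/-- An index whose partial product covers `q`. -/
noncomputable def J (q : Fin k → ℕ) : ℕ :=
  if h : ∃ j, q ≤ Λ.d (c.pi j) then h.choose else 0

lemma J_spec {q : Fin k → ℕ} (hq : ∀ i, (q i : ℕ∞) ≤ c.deg i) :
    q ≤ Λ.d (c.pi (c.J q)) := by
  have h : ∃ j, q ≤ Λ.d (c.pi j) := c.cover hq
  rw [J, dif_pos h]
  exact h.choose_spec

lemma consistent {p q : Fin k → ℕ} {j j' : ℕ} (hpq : p ≤ q)
    (hj : q ≤ Λ.d (c.pi j)) (hj' : q ≤ Λ.d (c.pi j')) :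
    Λ.segment (c.pi j) p q = Λ.segment (c.pi j') p q := by
  have key : ∀ j₁ j₂ : ℕ, j₁ ≤ j₂ → q ≤ Λ.d (c.pi j₁) →
      Λ.segment (c.pi j₂) p q = Λ.segment (c.pi j₁) p q := by
    intro j₁ j₂ h hq1
    induction j₂ with
    | zero => rw [Nat.le_zero.mp h]
    | succ n ihn =>
      rcases Nat.lt_or_ge j₁ (n + 1) with h' | h'
      · rw [c.hcomp n, Λ.segment_prefix (c.hsr n) hpq
          (le_trans hq1 (c.d_mono (Nat.lt_succ_iff.mp h')))]
        exact ihn (Nat.lt_succ_iff.mp h')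
      · rw [Nat.le_antisymm h h']
  rcases Nat.le_total j j' with h | h
  · exact (key j j' h hj).symm
  · exact key j' j h hj'

/-- The boundary-path segments of a chain. -/
noncomputable def seg (p q : Fin k → ℕ) : Λ.Path := Λ.segment (c.pi (c.J q)) p q

lemma seg_eq {p q : Fin k → ℕ} {j : ℕ} (hpq : p ≤ q) (hj : q ≤ Λ.d (c.pi j))
    (hq : ∀ i, (q i : ℕ∞) ≤ c.deg i) :
    c.seg p q = Λ.segment (c.pi j) p q :=
  c.consistent hpq (c.J_spec hq) hj

/-- The boundary path associated to a chain whose sources eventually have no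
`i`-edges in every direction `i` of finite limit degree. -/
noncomputable def toBP (hlc : Λ.LocallyConvex)
    (hb : ∀ i : Fin k, c.deg i ≠ ⊤ → ∀ J₀ : ℕ, ∃ j, J₀ ≤ j ∧
      ((Λ.d (c.pi j) i : ℕ∞) = c.deg i) ∧
      ∀ e, Λ.r e = Λ.s (c.pi j) → Λ.d e ≠ Pi.single i 1) :
    BoundaryPath Λ where
  deg := c.deg
  seg := c.seg
  seg_d p q hpq hq := by
    rw [c.seg_eq hpq (c.J_spec hq) hq]
    rw [Λ.segment_d hpq (c.J_spec hq)]
    rfl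
  seg_r p q hpq hq := by
    have hp : ∀ i, ((p i : ℕ) : ℕ∞) ≤ c.deg i := fun i =>
      le_trans (Nat.cast_le.mpr (hpq i)) (hq i)
    rw [c.seg_eq hpq (c.J_spec hq) hq, Λ.r_segment hpq (c.J_spec hq)]
    exact c.consistent (le_refl p) (le_trans hpq (c.J_spec hq)) (c.J_spec hp)
  seg_s p q hpq hq := by
    rw [c.seg_eq hpq (c.J_spec hq) hq, Λ.s_segment hpq (c.J_spec hq)]
    rfl
  seg_comp p q t hpq hqt ht := by
    have hq : ∀ i, ((q i : ℕ) : ℕ∞) ≤ c.deg i := fun i =>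
      le_trans (Nat.cast_le.mpr (hqt i)) (ht i)
    have hjq := c.J_spec hq
    have hjt := c.J_spec ht
    set j := max (c.J q) (c.J t) with hj
    have h1 : q ≤ Λ.d (c.pi j) := le_trans hjq (c.d_mono (le_max_left _ _))
    have h2 : t ≤ Λ.d (c.pi j) := le_trans hjt (c.d_mono (le_max_right _ _))
    rw [c.seg_eq hpq h1 hq, c.seg_eq hqt h2 ht, c.seg_eq (le_trans hpq hqt) h2 ht]
    exact Λ.segment_comp hpq hqt h2
  boundary p hp i hpi e hre hde := by
    have hne : c.deg i ≠ ⊤ := by rw [← hpi]; exact ENat.coe_ne_top _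
    obtain ⟨j, hjJ, hdj, hnoe⟩ := hb i hne (c.J p)
    have hpj : p ≤ Λ.d (c.pi j) := le_trans (c.J_spec hp) (c.d_mono hjJ)
    have hdi : Λ.d (c.pi j) i = p i := by
      have : ((Λ.d (c.pi j) i : ℕ) : ℕ∞) = ((p i : ℕ) : ℕ∞) := by rw [hdj, hpi]
      exact_mod_cast this
    have hzero : Λ.d (Λ.segment (c.pi j) p (Λ.d (c.pi j))) i = 0 := by
      rw [Λ.segment_d hpj (le_refl _)]
      simp [hdi]
    have hr : Λ.r (Λ.segment (c.pi j) p (Λ.d (c.pi j))) = c.seg p p := by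
      rw [Λ.r_segment hpj (le_refl _)]
      exact c.consistent (le_refl p) hpj (c.J_spec hp)
    have hs : Λ.s (Λ.segment (c.pi j) p (Λ.d (c.pi j))) = Λ.s (c.pi j) := by
      rw [Λ.s_segment hpj (le_refl _), Λ.segment_d_d]
    obtain ⟨e'', h1, h2⟩ := Λ.propagate hlc _ (Λ.segment (c.pi j) p (Λ.d (c.pi j))) i
      rfl hzero ⟨e, by rw [hre, hr], hde⟩
    rw [hs] at h1
    exact hnoe e'' h1 h2

lemma toBP_deg (hlc : Λ.LocallyConvex) (hb) : (c.toBP hlc hb).deg = c.deg := rfl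

lemma toBP_seg (hlc : Λ.LocallyConvex) (hb) {p q : Fin k → ℕ} {j : ℕ}
    (hpq : p ≤ q) (hj : q ≤ Λ.d (c.pi j))
    (hq : ∀ i, (q i : ℕ∞) ≤ c.deg i) :
    (c.toBP hlc hb).seg p q = Λ.segment (c.pi j) p q :=
  c.seg_eq hpq hj hq

end Chain

lemma ev_const_sup {f : ℕ → ℕ} (hf : Monotone f) {N : ℕ}
    (h : ∀ j, N ≤ j → f j = f N) : (⨆ j, (f j : ℕ∞)) = (f N : ℕ∞) := by
  refine le_antisymm (iSup_le fun j => ?_) (le_iSup (fun j => ((f j : ℕ∞))) N)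
  rcases le_total j N with hj | hj
  · exact Nat.cast_le.mpr (hf hj)
  · rw [h j hj]

lemma sup_ne_top_ev_const {f : ℕ → ℕ} (hf : Monotone f)
    (h : (⨆ j, (f j : ℕ∞)) ≠ ⊤) :
    ∃ N, (∀ j, N ≤ j → f j = f N) ∧ ((f N : ℕ∞) = ⨆ j, (f j : ℕ∞)) := by
  obtain ⟨M, hM⟩ : ∃ m : ℕ, (m : ℕ∞) = ⨆ j, (f j : ℕ∞) :=
    ⟨_, ENat.coe_toNat h⟩
  have hb : ∀ j, f j ≤ M := by
    intro j
    have h2 : (f j : ℕ∞) ≤ ⨆ j, (f j : ℕ∞) := le_iSup (fun j => ((f j : ℕ∞))) j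
    rw [← hM] at h2
    exact_mod_cast h2
  have hbdd : BddAbove (Set.range f) := ⟨M, by rintro _ ⟨j, rfl⟩; exact hb j⟩
  have hmem := Nat.sSup_mem (s := Set.range f) ⟨f 0, 0, rfl⟩ hbdd
  obtain ⟨N, hN⟩ := hmem
  have hmax : ∀ j, f j ≤ f N := fun j => hN ▸ le_csSup hbdd ⟨j, rfl⟩
  have hconst : ∀ j, N ≤ j → f j = f N := fun j hj => le_antisymm (hmax j) (hf hj)
  exact ⟨N, hconst, (ev_const_sup hf hconst).symm⟩

lemma enat_eq_top_of_forall_le {a : ℕ∞} (h : ∀ n : ℕ, (n : ℕ∞) ≤ a) : a = ⊤ := by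
  by_contra hne
  have h1 := h ((a.toNat) + 1)
  have h2 : a ≤ (a.toNat : ℕ∞) := le_of_eq (ENat.coe_toNat hne).symm
  have h3 : ((a.toNat + 1 : ℕ) : ℕ∞) ≤ (a.toNat : ℕ∞) := le_trans h1 h2
  exact absurd (Nat.cast_le.mp h3) (by omega)

open Classical in
/-- Greedy step: an element of `uΛ^{≤𝟙}` whose source avoids `H`, if it
exists. -/
noncomputable def nextStep (Λ : KGraph k) (H : Set Λ.Path) (u : Λ.Path) :
    Λ.Path :=
  if h : ∃ lam, lam ∈ Λ.boundedPaths (fun _ => 1) ∧ Λ.r lam = u ∧ Λ.s lam ∉ H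
  then h.choose else u

lemma nextStep_spec (Λ : KGraph k) (H : Set Λ.Path) (u : Λ.Path)
    (h : ∃ lam, lam ∈ Λ.boundedPaths (fun _ => 1) ∧ Λ.r lam = u ∧ Λ.s lam ∉ H) :
    Λ.nextStep H u ∈ Λ.boundedPaths (fun _ => 1) ∧ Λ.r (Λ.nextStep H u) = u ∧
      Λ.s (Λ.nextStep H u) ∉ H := by
  rw [nextStep, dif_pos h]
  exact h.choose_spec

/-- Partial products of the greedy chain avoiding `H`. -/
noncomputable def chainPi (Λ : KGraph k) (H : Set Λ.Path) (v : Λ.Path) :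
    ℕ → Λ.Path
  | 0 => v
  | j + 1 => Λ.comp (Λ.chainPi H v j) (Λ.nextStep H (Λ.s (Λ.chainPi H v j)))

end KGraph

/-- A locally convex row-finite `k`-graph `Λ` is cofinal iff
the only saturated hereditary subsets of `Λ^0` are `∅` and `Λ^0`. -/
theorem statement14 {k : ℕ} (Λ : KGraph k) (hlc : Λ.LocallyConvex)
    (hrf : Λ.RowFinite) :
    Λ.Cofinal ↔ ∀ H : Set Λ.Path, (∀ v ∈ H, Λ.IsVertex v) →
      Λ.Hereditary H → Λ.Saturated H → H = ∅ ∨ H = {v | Λ.IsVertex v} := by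
  constructor
  · -- cofinal ⇒ only trivial saturated hereditary sets
    intro hcof H hHv hher hsat
    by_cases hemp : H = ∅
    · exact Or.inl hemp
    right
    obtain ⟨w, hw⟩ := Set.nonempty_iff_ne_empty.mpr hemp
    apply Set.Subset.antisymm
    · intro u hu
      exact hHv u hu
    intro v hv
    simp only [Set.mem_setOf_eq] at hv
    by_contra hvH
    have hkey : ∀ u, Λ.IsVertex u → u ∉ H →
        ∃ lam, lam ∈ Λ.boundedPaths (fun _ => 1) ∧ Λ.r lam = u ∧ Λ.s lam ∉ H := by
      intro u hu hnu
      by_contra hcon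
      push_neg at hcon
      exact hnu (hsat u hu ⟨fun _ => 1, hcon⟩)
    have hinv : ∀ j, Λ.s (Λ.chainPi H v j) ∉ H := by
      intro j
      induction j with
      | zero =>
        show Λ.s v ∉ H
        rwa [Λ.s_of_vertex hv]
      | succ nn ihn =>
        have hspec := Λ.nextStep_spec H _ (hkey _ (Λ.isVertex_s _) ihn)
        show Λ.s (Λ.comp (Λ.chainPi H v nn)
          (Λ.nextStep H (Λ.s (Λ.chainPi H v nn)))) ∉ H
        rw [Λ.s_comp _ _ hspec.2.1.symm]
        exact hspec.2.2
    set c : KGraph.Chain Λ :=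
      ⟨Λ.chainPi H v, fun j => Λ.nextStep H (Λ.s (Λ.chainPi H v j)),
        fun j => (Λ.nextStep_spec H _ (hkey _ (Λ.isVertex_s _) (hinv j))).2.1.symm,
        fun j => rfl⟩ with hcdef
    have hb : ∀ i : Fin k, c.deg i ≠ ⊤ → ∀ J₀ : ℕ, ∃ j, J₀ ≤ j ∧
        ((Λ.d (c.pi j) i : ℕ∞) = c.deg i) ∧
        ∀ e, Λ.r e = Λ.s (c.pi j) → Λ.d e ≠ Pi.single i 1 := by
      intro i hne J₀
      obtain ⟨N, hN1, hN2⟩ := KGraph.sup_ne_top_ev_const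
        (f := fun j => Λ.d (c.pi j) i) (fun a b hab => c.d_mono hab i) hne
      refine ⟨max J₀ N + 1, by omega, ?_, ?_⟩
      · have e2 : Λ.d (c.pi (max J₀ N + 1)) i = Λ.d (c.pi N) i := hN1 _ (by omega)
        rw [e2]
        exact hN2
      · intro e hre hde
        have hspec := Λ.nextStep_spec H _ (hkey _ (Λ.isVertex_s _) (hinv (max J₀ N)))
        have hdlam : Λ.d (Λ.nextStep H (Λ.s (Λ.chainPi H v (max J₀ N)))) i = 0 := by
          have e1 : Λ.d (c.pi (max J₀ N + 1)) i = Λ.d (c.pi (max J₀ N)) i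
              + Λ.d (Λ.nextStep H (Λ.s (Λ.chainPi H v (max J₀ N)))) i := by
            have hd := Λ.d_comp (Λ.chainPi H v (max J₀ N)) _ hspec.2.1.symm
            show Λ.d (Λ.comp (Λ.chainPi H v (max J₀ N))
              (Λ.nextStep H (Λ.s (Λ.chainPi H v (max J₀ N))))) i = _
            rw [hd]
            rfl
          have e2 : Λ.d (c.pi (max J₀ N + 1)) i = Λ.d (c.pi N) i := hN1 _ (by omega)
          have e3 : Λ.d (c.pi (max J₀ N)) i = Λ.d (c.pi N) i := hN1 _ (by omega)
          omega
        have hbd := hspec.1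
        simp only [KGraph.boundedPaths, Set.mem_setOf_eq] at hbd
        refine hbd.2 i (by rw [hdlam]; show (0:ℕ) < 1; omega) e ?_ hde
        rw [hre]
        exact Λ.s_comp _ _ hspec.2.1.symm
    obtain ⟨n, hn, μ, hrμ, hsμ⟩ := hcof (c.toBP hlc hb) w (hHv w hw)
    obtain ⟨j, hj⟩ := c.cover (q := n) hn
    have hseg : (c.toBP hlc hb).seg n n = Λ.segment (c.pi j) n n :=
      c.toBP_seg hlc hb (le_refl n) hj hn
    have hmem : (c.toBP hlc hb).seg n n ∈ H := by
      rw [← hsμ]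
      exact hher μ (by rw [hrμ]; exact hw)
    have hend : Λ.s (Λ.segment (c.pi j) n (Λ.d (c.pi j))) ∈ H := by
      apply hher
      rw [Λ.r_segment hj (le_refl _)]
      rw [hseg] at hmem
      exact hmem
    rw [Λ.s_segment hj (le_refl _), Λ.segment_d_d] at hend
    exact hinv j hend
  · -- only trivial saturated hereditary sets ⇒ cofinal
    intro htri x v hv
    classical
    set R : Set Λ.Path := {w | ∃ n : Fin k → ℕ, (∀ i, ((n i : ℕ) : ℕ∞) ≤ x.deg i) ∧
      ∃ μ : Λ.Path, Λ.r μ = w ∧ Λ.s μ = x.seg n n} with hRdef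
    have hzseg : ∀ i, (((0 : Fin k → ℕ) i : ℕ) : ℕ∞) ≤ x.deg i := by
      intro i
      simp
    have hx00 : Λ.IsVertex (x.seg 0 0) := x.seg_r 0 0 (le_refl _) hzseg
    have hx00R : x.seg 0 0 ∈ R :=
      ⟨0, hzseg, x.seg 0 0, x.seg_r 0 0 (le_refl _) hzseg,
        x.seg_s 0 0 (le_refl _) hzseg⟩
    have hvert : ∀ u ∈ {w | Λ.IsVertex w ∧ w ∉ R}, Λ.IsVertex u := fun u hu => hu.1
    have hhered : Λ.Hereditary {w | Λ.IsVertex w ∧ w ∉ R} := by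
      intro lam hlam
      refine ⟨Λ.isVertex_s _, ?_⟩
      rintro ⟨n, hn, μ, hrμ, hsμ⟩
      refine hlam.2 ⟨n, hn, Λ.comp lam μ, ?_, ?_⟩
      · exact Λ.r_comp lam μ hrμ.symm
      · rw [Λ.s_comp lam μ hrμ.symm]
        exact hsμ
    have hsatH : Λ.Saturated {w | Λ.IsVertex w ∧ w ∉ R} := by
      intro u hu hex
      refine ⟨hu, ?_⟩
      rintro ⟨m, hm, μ, hrμ, hsμ⟩
      obtain ⟨n, hall⟩ := hex
      set cf : ℕ → Fin k → ℕ := fun j => emin (fun i => m i + j) x.deg with hcf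
      have hcf_cast : ∀ j i, ((cf j i : ℕ) : ℕ∞) = min ((m i + j : ℕ) : ℕ∞) (x.deg i) :=
        fun j i => KGraph.emin_cast _ _ i
      have hcfle : ∀ j i, ((cf j i : ℕ) : ℕ∞) ≤ x.deg i := fun j i =>
        (hcf_cast j i) ▸ min_le_right _ _
      have hmle : ∀ j, m ≤ cf j := by
        intro j
        refine KGraph.pile fun i => ?_
        have h1 : ((m i : ℕ) : ℕ∞) ≤ ((cf j i : ℕ) : ℕ∞) := by
          rw [hcf_cast j i]
          refine le_min ?_ (hm i)
          exact Nat.cast_le.mpr (by omega)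
        exact_mod_cast h1
      have hcmono : ∀ j j', j ≤ j' → cf j ≤ cf j' := by
        intro j j' hj
        refine KGraph.pile fun i => ?_
        have h1 : ((cf j i : ℕ) : ℕ∞) ≤ ((cf j' i : ℕ) : ℕ∞) := by
          rw [hcf_cast j i, hcf_cast j' i]
          exact min_le_min (Nat.cast_le.mpr (by omega)) (le_refl _)
        exact_mod_cast h1
      have hsmu : ∀ j, Λ.s μ = Λ.r (x.seg m (cf j)) := by
        intro j
        rw [x.seg_r m (cf j) (hmle j) (hcfle j), hsμ]
      have hsr : ∀ j, Λ.s (Λ.comp μ (x.seg m (cf j))) = Λ.r (x.seg (cf j) (cf (j+1))) := by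
        intro j
        rw [Λ.s_comp _ _ (hsmu j), x.seg_s m (cf j) (hmle j) (hcfle j),
          x.seg_r (cf j) (cf (j+1)) (hcmono j (j+1) (by omega)) (hcfle (j+1))]
      have hcomp : ∀ j, Λ.comp μ (x.seg m (cf (j+1)))
          = Λ.comp (Λ.comp μ (x.seg m (cf j))) (x.seg (cf j) (cf (j+1))) := by
        intro j
        rw [Λ.comp_assoc _ _ _ (hsmu j) (by
          rw [x.seg_s m (cf j) (hmle j) (hcfle j),
            x.seg_r (cf j) (cf (j+1)) (hcmono j (j+1) (by omega)) (hcfle (j+1))])]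
        rw [x.seg_comp m (cf j) (cf (j+1)) (hmle j) (hcmono j (j+1) (by omega)) (hcfle (j+1))]
      set c : KGraph.Chain Λ := ⟨fun j => Λ.comp μ (x.seg m (cf j)),
        fun j => x.seg (cf j) (cf (j+1)), hsr, hcomp⟩ with hcdef
      have hdpi : ∀ j i, Λ.d (c.pi j) i = Λ.d μ i + (cf j i - m i) := by
        intro j i
        show Λ.d (Λ.comp μ (x.seg m (cf j))) i = _
        rw [Λ.d_comp _ _ (hsmu j)]
        have h1 := x.seg_d m (cf j) (hmle j) (hcfle j)
        show (Λ.d μ + Λ.d (x.seg m (cf j))) i = _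
        rw [Pi.add_apply, h1, Pi.sub_apply]
      have hb : ∀ i : Fin k, c.deg i ≠ ⊤ → ∀ J₀ : ℕ, ∃ j, J₀ ≤ j ∧
          ((Λ.d (c.pi j) i : ℕ∞) = c.deg i) ∧
          ∀ e, Λ.r e = Λ.s (c.pi j) → Λ.d e ≠ Pi.single i 1 := by
        intro i hne J₀
        have hdx : x.deg i ≠ ⊤ := by
          intro htop
          apply hne
          refine KGraph.enat_eq_top_of_forall_le fun nn => ?_
          refine le_trans ?_ (c.coe_le_deg nn i)
          have h2 := hcf_cast nn i
          rw [htop, min_eq_left le_top] at h2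
          have h1 : cf nn i = m i + nn := by exact_mod_cast h2
          have h3 : Λ.d (c.pi nn) i = Λ.d μ i + nn := by
            rw [hdpi nn i, h1]
            have h5 : m i ≤ m i + nn := by omega
            omega
          rw [h3]
          exact Nat.cast_le.mpr (by omega)
        set D := (x.deg i).toNat with hD
        have hDx : ((D : ℕ) : ℕ∞) = x.deg i := ENat.coe_toNat hdx
        have hcfD : ∀ j, D ≤ j → cf j i = D := by
          intro j hj
          have h2 := hcf_cast j i
          have h4 : x.deg i ≤ ((m i + j : ℕ) : ℕ∞) := by
            rw [← hDx]
            exact Nat.cast_le.mpr (by omega)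
          rw [min_eq_right h4, ← hDx] at h2
          exact_mod_cast h2
        have hfD : ∀ j, D ≤ j → Λ.d (c.pi j) i = Λ.d (c.pi D) i := by
          intro j hj
          rw [hdpi, hdpi, hcfD j hj, hcfD D (le_refl _)]
        have hfD' : ∀ j, D ≤ j →
            (fun j' => Λ.d (c.pi j') i) j = (fun j' => Λ.d (c.pi j') i) D := hfD
        have hsup : c.deg i = ((Λ.d (c.pi D) i : ℕ) : ℕ∞) :=
          KGraph.ev_const_sup (fun a b hab => c.d_mono hab i) hfD'
        refine ⟨max J₀ D, le_max_left _ _, ?_, ?_⟩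
        · rw [hsup]
          exact Nat.cast_inj.mpr (hfD (max J₀ D) (le_max_right _ _))
        · intro e hre hde
          have hcfi : ((cf (max J₀ D) i : ℕ) : ℕ∞) = x.deg i := by
            rw [hcfD _ (le_max_right _ _), hDx]
          have hspi : Λ.s (c.pi (max J₀ D))
              = x.seg (cf (max J₀ D)) (cf (max J₀ D)) := by
            show Λ.s (Λ.comp μ (x.seg m (cf (max J₀ D)))) = _
            rw [Λ.s_comp _ _ (hsmu _), x.seg_s m _ (hmle _) (hcfle _)]
          exact x.boundary (cf (max J₀ D)) (hcfle _) i hcfi e (by rw [hre, hspi]) hde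
      set y := c.toBP hlc hb with hy
      set P := emin n c.deg with hP
      have hP0 : (0 : Fin k → ℕ) ≤ P := KGraph.pile fun i => Nat.zero_le _
      have hPle : ∀ i, ((P i : ℕ) : ℕ∞) ≤ c.deg i := fun i =>
        (KGraph.emin_cast n c.deg i) ▸ min_le_right _ _
      have hslam : Λ.s (y.seg 0 P) = y.seg P P := y.seg_s 0 P hP0 hPle
      have hlam_mem : y.seg 0 P ∈ Λ.boundedPaths n := by
        have hd : Λ.d (y.seg 0 P) = P - 0 := y.seg_d 0 P hP0 hPle
        simp only [KGraph.boundedPaths, Set.mem_setOf_eq]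
        constructor
        · refine KGraph.pile fun i => ?_
          have h1 : Λ.d (y.seg 0 P) i = P i := by
            rw [hd, Pi.sub_apply]
            simp only [Pi.zero_apply]
            omega
          rw [h1]
          have h2 : ((P i : ℕ) : ℕ∞) ≤ ((n i : ℕ) : ℕ∞) := by
            rw [KGraph.emin_cast n c.deg i]
            exact min_le_left _ _
          exact_mod_cast h2
        · intro i hlt e hre hde
          have h1 : Λ.d (y.seg 0 P) i = P i := by
            rw [hd, Pi.sub_apply]
            simp only [Pi.zero_apply]
            omega
          rw [h1] at hlt
          have h2 : ((P i : ℕ) : ℕ∞) = c.deg i := by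
            rcases min_cases ((n i : ℕ∞)) (c.deg i) with ⟨h3, _⟩ | ⟨h3, _⟩
            · exfalso
              have h4 : ((P i : ℕ) : ℕ∞) = ((n i : ℕ) : ℕ∞) := by
                rw [KGraph.emin_cast n c.deg i, h3]
              have h5 : P i = n i := by exact_mod_cast h4
              omega
            · rw [KGraph.emin_cast n c.deg i, h3]
          exact y.boundary P hPle i h2 e (by rw [hre, hslam]) hde
      have hrlam : Λ.r (y.seg 0 P) = u := by
        rw [y.seg_r 0 P hP0 hPle]
        have h1 : y.seg 0 0 = Λ.segment (c.pi 0) 0 0 :=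
          c.toBP_seg hlc hb (le_refl _) (KGraph.pile fun i => Nat.zero_le _)
            (fun i => by simp)
        rw [h1, Λ.segment_zero_zero]
        show Λ.r (Λ.comp μ (x.seg m (cf 0))) = u
        rw [Λ.r_comp _ _ (hsmu 0)]
        exact hrμ
      have hsH' := hall (y.seg 0 P) hlam_mem hrlam
      rw [hslam] at hsH'
      obtain ⟨j, hj⟩ := c.cover (q := P) hPle
      have hyP : y.seg P P = Λ.segment (c.pi j) P P :=
        c.toBP_seg hlc hb (le_refl _) hj hPle
      refine hsH'.2 ⟨cf j, hcfle j, Λ.segment (c.pi j) P (Λ.d (c.pi j)), ?_, ?_⟩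
      · rw [Λ.r_segment hj (le_refl _), hyP]
      · rw [Λ.s_segment hj (le_refl _), Λ.segment_d_d]
        show Λ.s (Λ.comp μ (x.seg m (cf j))) = _
        rw [Λ.s_comp _ _ (hsmu j), x.seg_s m _ (hmle j) (hcfle j)]
    rcases htri {w | Λ.IsVertex w ∧ w ∉ R} hvert hhered hsatH with h | h
    · have hvnot : v ∉ {w | Λ.IsVertex w ∧ w ∉ R} := by
        rw [h]
        exact Set.notMem_empty v
      have hvR : v ∈ R := by
        by_contra hnR
        exact hvnot ⟨hv, hnR⟩
      exact hvR
    · exfalso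
      have hmem : x.seg 0 0 ∈ {w | Λ.IsVertex w ∧ w ∉ R} := by
        rw [h]
        exact hx00
      exact hmem.2 hx00R
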